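/- Let G be an unmixed bipartite graph on V_n = {x_1,...,x_n} ∪ {y_1,...,y_n} (so {x_i,y_i} ∈ E(G) for all i, the transitivity condition holds, and every minimal vertex cover has size n). Suppose G has an induced subgraph K_{m,m} (m ≥ 2) on V_m = {x_1,...,x_m} ∪ {y_1,...,y_m}. Let H be the induced subgraph of G on V_n \ V_{m-1}, where V_{m-1} = {x_1,...,x_{m-1}} ∪ {y_1,...,y_{m-1}}. For every subset C ⊆ V_n \ V_{m-1} with x_m ∈ C: C is a minimal vertex cover of H if and only if C ∪ {x_1,...,x_m} is a minimal vertex cover of G. -/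

import Mathlib

/-- `C` is a vertex cover of the bipartite graph with edge relation `E`
(vertex `Sum.inl i` is `x_{i+1}`, `Sum.inr j` is `y_{j+1}`). -/
def IsCover (n : ℕ) (E : Fin n → Fin n → Prop) (C : Set (Fin n ⊕ Fin n)) : Prop :=
  ∀ i j, E i j → Sum.inl i ∈ C ∨ Sum.inr j ∈ C

/-- `C` is a minimal vertex cover. -/
def IsMinCover (n : ℕ) (E : Fin n → Fin n → Prop) (C : Set (Fin n ⊕ Fin n)) : Prop :=
  IsCover n E C ∧ ∀ D ⊂ C, ¬ IsCover n E D

/-- for `C ⊆ V_n \ V_{m-1}` with `x_m ∈ C`, `C` is a minimal vertex cover of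
`H` iff `C ∪ {x_1,…,x_m}` is a minimal vertex cover of `G`. -/
theorem stmt4 (n m : ℕ) (hm : 2 ≤ m) (hn : m ≤ n) (E : Fin n → Fin n → Prop)
    (hrefl : ∀ i, E i i)
    (htrans : ∀ i j k : Fin n, i ≠ j → j ≠ k → i ≠ k → E i j → E j k → E i k)
    (hone : ∀ C, IsMinCover n E C → ∀ i, (Sum.inl i ∈ C ↔ Sum.inr i ∉ C))
    (hcard : ∀ C, IsMinCover n E C → C.ncard = n)
    (hK : ∀ i j : Fin n, i.val < m → j.val < m → E i j)
    (C : Set (Fin n ⊕ Fin n))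
    (hC : ∀ v ∈ C, m - 1 ≤ Sum.elim Fin.val Fin.val v)
    (hx : Sum.inl (⟨m - 1, by omega⟩ : Fin n) ∈ C) :
    IsMinCover n (fun i j => E i j ∧ m - 1 ≤ i.val ∧ m - 1 ≤ j.val) C ↔
      IsMinCover n E (C ∪ Sum.inl '' {i : Fin n | i.val < m}) := by
  have hμlt : m - 1 < n := by omega
  set μ : Fin n := ⟨m - 1, hμlt⟩ with hμdef
  set X : Set (Fin n ⊕ Fin n) := Sum.inl '' {i : Fin n | i.val < m} with hXdef
  have hμval : μ.val = m - 1 := rfl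
  have hxμ : Sum.inl μ ∈ C := hx
  have hμX : Sum.inl μ ∈ X := ⟨μ, by simp only [Set.mem_setOf_eq, hμval]; omega, rfl⟩
  have hinlX : ∀ i : Fin n, Sum.inl i ∈ X ↔ i.val < m := by
    intro i
    constructor
    · rintro ⟨a, ha, h⟩; cases Sum.inl.inj h; exact ha
    · intro h; exact ⟨i, h, rfl⟩
  have hinrX : ∀ j : Fin n, Sum.inr j ∉ X := by
    rintro j ⟨a, _, h⟩; exact Sum.inl_ne_inr h
  constructor
  · rintro ⟨hcov, hmin⟩
    -- First show inr μ ∉ C using minimality of C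
    have hyC : Sum.inr μ ∉ C := by
      intro hy
      have h1 := hmin (C \ {Sum.inr μ}) ⟨Set.diff_subset, fun hsub => (hsub hy).2 rfl⟩
      have h2 := hmin (C \ {Sum.inl μ}) ⟨Set.diff_subset, fun hsub => (hsub hxμ).2 rfl⟩
      simp only [IsCover, not_forall] at h1 h2
      obtain ⟨k, j1, hE1, hne1⟩ := h1
      obtain ⟨i2, l, hE2, hne2⟩ := h2
      push_neg at hne1 hne2
      obtain ⟨hk1, hj1⟩ := hne1
      obtain ⟨hi2, hl2⟩ := hne2
      have hkC : Sum.inl k ∉ C := fun h => hk1 ⟨h, fun heq => Sum.inl_ne_inr heq⟩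
      have hj1C : Sum.inr j1 ∈ C := by
        rcases hcov k j1 hE1 with h | h
        · exact absurd h hkC
        · exact h
      have hj1μ : j1 = μ := by
        by_contra hne
        exact hj1 ⟨hj1C, fun heq => hne (Sum.inr.inj heq)⟩
      subst hj1μ
      have hlC : Sum.inr l ∉ C := fun h => hl2 ⟨h, fun heq => Sum.inr_ne_inl heq⟩
      have hi2C : Sum.inl i2 ∈ C := by
        rcases hcov i2 l hE2 with h | h
        · exact h
        · exact absurd h hlC
      have hi2μ : i2 = μ := by
        by_contra hne
        exact hi2 ⟨hi2C, fun heq => hne (Sum.inl.inj heq)⟩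
      subst hi2μ
      -- now edges E k μ and E μ l in H, with inl k ∉ C, inr l ∉ C
      have hkμ : k ≠ μ := fun h => hkC (h ▸ hxμ)
      have hlμ : l ≠ μ := fun h => hlC (h ▸ hy)
      by_cases hkl : k = l
      · subst hkl
        rcases hcov k k ⟨hrefl k, hE1.2.1, hE1.2.1⟩ with h | h
        · exact hkC h
        · exact hlC h
      · have hEkl : E k l := htrans k μ l hkμ (Ne.symm hlμ) hkl hE1.1 hE2.1
        rcases hcov k l ⟨hEkl, hE1.2.1, hE2.2.2⟩ with h | h
        · exact hkC h
        · exact hlC h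
    -- Cover of G
    have hcovG : IsCover n E (C ∪ X) := by
      intro i j hE
      by_cases hi : i.val < m
      · exact Or.inl (Or.inr ((hinlX i).2 hi))
      · push_neg at hi
        by_cases hj : m - 1 ≤ j.val
        · rcases hcov i j ⟨hE, by omega, hj⟩ with h | h
          · exact Or.inl (Or.inl h)
          · exact Or.inr (Or.inl h)
        · push_neg at hj
          have hij : i ≠ j := Fin.ne_of_val_ne (by omega)
          have hjμ : j ≠ μ := Fin.ne_of_val_ne (by rw [hμval]; omega)
          have hiμ : i ≠ μ := Fin.ne_of_val_ne (by rw [hμval]; omega)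
          have hEjμ : E j μ := hK j μ (by omega) (by rw [hμval]; omega)
          have hEiμ : E i μ := htrans i j μ hij hjμ hiμ hE hEjμ
          rcases hcov i μ ⟨hEiμ, by omega, le_of_eq hμval.symm⟩ with h | h
          · exact Or.inl (Or.inl h)
          · exact absurd h hyC
    refine ⟨hcovG, ?_⟩
    rintro D ⟨hDsub, hDne⟩ hDcov
    rw [Set.not_subset] at hDne
    obtain ⟨v, hvCX, hvD⟩ := hDne
    have hXcase : ∀ a : Fin n, a.val < m → Sum.inl a ∉ D → False := by
      intro a ha haD
      rcases hDcov a a (hrefl a) with h | h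
      · exact haD h
      · have haC : Sum.inr a ∈ C := by
          rcases hDsub h with h' | h'
          · exact h'
          · exact absurd h' (hinrX a)
        have := hC _ haC
        simp only [Sum.elim_inr] at this
        have haμ : a = μ := Fin.ext (by rw [hμval]; omega)
        exact hyC (haμ ▸ haC)
    rcases hvCX with hvC | hvX
    · by_cases hvX : v ∈ X
      · obtain ⟨a, ha, rfl⟩ := hvX
        exact hXcase a ha hvD
      · refine hmin (C \ {v}) ⟨Set.diff_subset, fun h => (h hvC).2 rfl⟩ ?_
        rintro i j ⟨hE, hi, hj⟩
        rcases hDcov i j hE with h | h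
        · rcases hDsub h with h' | h'
          · exact Or.inl ⟨h', fun heq => hvD (heq ▸ h)⟩
          · have : i = μ := by
              have hi' := (hinlX i).1 h'
              exact Fin.ext (by rw [hμval]; omega)
            subst this
            exact Or.inl ⟨hxμ, fun heq => hvX (heq ▸ hμX)⟩
        · have h' : Sum.inr j ∈ C := by
            rcases hDsub h with h' | h'
            · exact h'
            · exact absurd h' (hinrX j)
          exact Or.inr ⟨h', fun heq => hvD (heq ▸ h)⟩
    · obtain ⟨a, ha, rfl⟩ := hvX
      exact hXcase a ha hvD
  · rintro hG
    obtain ⟨hcov, hmin⟩ := hG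
    have hμ1 : Sum.inr μ ∉ C ∪ X := (hone _ ⟨hcov, hmin⟩ μ).1 (Or.inr hμX)
    have hyC : Sum.inr μ ∉ C := fun h => hμ1 (Or.inl h)
    constructor
    · rintro i j ⟨hE, hi, hj⟩
      rcases hcov i j hE with h | h
      · rcases h with h | h
        · exact Or.inl h
        · have hiμ : i = μ := by
            have hi' := (hinlX i).1 h
            exact Fin.ext (by rw [hμval]; omega)
          exact Or.inl (hiμ ▸ hxμ)
      · rcases h with h | h
        · exact Or.inr h
        · exact absurd h (hinrX j)
    · rintro D ⟨hDsub, hDne⟩ hDcov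
      have hyD : Sum.inr μ ∉ D := fun h => hyC (hDsub h)
      have hμD : Sum.inl μ ∈ D := by
        rcases hDcov μ μ ⟨hrefl μ, le_of_eq hμval.symm, le_of_eq hμval.symm⟩ with h | h
        · exact h
        · exact absurd h hyD
      have hcovDX : IsCover n E (D ∪ X) := by
        intro i j hE
        by_cases hi : i.val < m
        · exact Or.inl (Or.inr ((hinlX i).2 hi))
        · push_neg at hi
          by_cases hj : m - 1 ≤ j.val
          · rcases hDcov i j ⟨hE, by omega, hj⟩ with h | h
            · exact Or.inl (Or.inl h)
            · exact Or.inr (Or.inl h)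
          · push_neg at hj
            have hij : i ≠ j := Fin.ne_of_val_ne (by omega)
            have hjμ : j ≠ μ := Fin.ne_of_val_ne (by rw [hμval]; omega)
            have hiμ : i ≠ μ := Fin.ne_of_val_ne (by rw [hμval]; omega)
            have hEjμ : E j μ := hK j μ (by omega) (by rw [hμval]; omega)
            have hEiμ : E i μ := htrans i j μ hij hjμ hiμ hE hEjμ
            rcases hDcov i μ ⟨hEiμ, by omega, le_of_eq hμval.symm⟩ with h | h
            · exact Or.inl (Or.inl h)
            · exact absurd h hyD
      rw [Set.not_subset] at hDne
      obtain ⟨v, hvC, hvD⟩ := hDne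
      have hvX : v ∉ X := by
        rintro ⟨a, ha, rfl⟩
        have := hC _ hvC
        simp only [Sum.elim_inl] at this
        simp only [Set.mem_setOf_eq] at ha
        have haμ : a = μ := Fin.ext (show a.val = m - 1 by omega)
        exact hvD (haμ ▸ hμD)
      refine hmin (D ∪ X) ⟨Set.union_subset_union_left _ hDsub, ?_⟩ hcovDX
      intro hsub
      rcases hsub (Or.inl hvC) with h | h
      · exact hvD h
      · exact hvX h
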